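/- If the machine M is FTA-compliant with the downgrader architectural specification (DG, C_DG), i.e., FTA-compliant with (DG, ℐ) for some ℐ ∈ C_DG, and π(p) depends on {C} actions at α, then M,π,α ⊨ ¬K_L p. -/

import Mathlib

structure Machine (S A D O : Type) where
  s0 : S
  step : S → A → S
  dom : A → D
  obs : D → S → O

namespace Machine

def run {S A D O : Type} (M : Machine S A D O) (α : List A) : S :=
  α.foldl M.step M.s0

end Machine
/-- Elements of a view: actions or (group) observations. -/
inductive VE (A O' : Type) where
  | act : A → VE A O'
  | obs : O' → VE A O'

open Classical in
/-- Absorptive concatenation: `σ ∘ x` is `σ` if `x` equals the last element of `σ`,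
and `σ ++ [x]` otherwise. -/
noncomputable def absorb {X : Type} (σ : List X) (x : X) : List X :=
  if σ.getLast? = some x then σ else σ ++ [x]

open Classical in
/-- View of a group `G`, computed on the reversed action sequence. -/
noncomputable def viewR {S A D O : Type} (M : Machine S A D O) (G : Set D) :
    List A → List (VE A (G → O))
  | [] => [VE.obs (fun u : G => M.obs u.1 M.s0)]
  | a :: ρ =>
    let o : VE A (G → O) := VE.obs (fun u : G => M.obs u.1 (M.run ((a :: ρ).reverse)))
    if M.dom a ∈ G then viewR M G ρ ++ [VE.act a, o] else absorb (viewR M G ρ) o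

/-- The view of group `G` of the action sequence `α`. -/
noncomputable def view {S A D O : Type} (M : Machine S A D O) (G : Set D) (α : List A) :
    List (VE A (G → O)) :=
  viewR M G α.reverse
/-- Formulas of the epistemic logic (without distributed knowledge). -/
inductive Formula (PC D : Type) where
  | tru : Formula PC D
  | atom : PC → Formula PC D
  | neg : Formula PC D → Formula PC D
  | conj : Formula PC D → Formula PC D → Formula PC D
  | know : Set D → Formula PC D → Formula PC D

/-- Satisfaction relation `M,π,α ⊨ φ`. -/
def sat {S A D O PC : Type} (M : Machine S A D O) (π : PC → Set (List A)) :
    List A → Formula PC D → Prop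
  | _, .tru => True
  | α, .atom p => α ∈ π p
  | α, .neg φ => ¬ sat M π α φ
  | α, .conj φ ψ => sat M π α φ ∧ sat M π α ψ
  | α, .know G φ => ∀ α', view M G α' = view M G α → sat M π α' φ
open Classical in
/-- `restr dm G α` : subsequence of `α` of actions whose domain lies in `G`. -/
noncomputable def restr {A D : Type} (dm : A → D) (G : Set D) (α : List A) : List A :=
  α.filter (fun a => decide (dm a ∈ G))

/-- Proposition `X` depends on `G` actions at `α`. -/
def DependsOnActs {A D : Type} (dm : A → D) (G : Set D) (X : Set (List A)) (α : List A) :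
    Prop :=
  ∃ β : List A, restr dm Gᶜ α = restr dm Gᶜ β ∧ (α ∈ X ↔ β ∉ X)
/-- An extended architecture: `edge u v = none` means no edge, `edge u v = some none`
means an edge labelled `⊤`, and `edge u v = some (some f)` means an edge labelled by
the filter-function name `f`.  There is at most one label per ordered pair by
construction, and the relation is reflexive with label `⊤`. -/
structure ExtArch (D L : Type) where
  edge : D → D → Option (Option L)
  refl : ∀ u, edge u u = some none

/-- Values of the `tf` function and of filter-function interpretations:
`eps` is the empty value ε, `base v` an arbitrary basic value, and
`pair σ a` the pair `(σ, a)` of a `tf` value and an action. -/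
inductive TFVal (A V : Type) where
  | eps : TFVal A V
  | base : V → TFVal A V
  | pair : List (TFVal A V) → A → TFVal A V

/-- `σ ⌢ x`: appends `x` as a single new last element unless `x = ε`. -/
def snoc' {A V : Type} (σ : List (TFVal A V)) : TFVal A V → List (TFVal A V)
  | .eps => σ
  | x => σ ++ [x]

/-- `tf`, computed on the reversed action sequence. -/
def tfR {A D L V : Type} (Arch : ExtArch D L) (dm : A → D)
    (I : L → List A → A → TFVal A V) : List A → D → List (TFVal A V)
  | [], _ => []
  | a :: ρ, u =>
    match Arch.edge (dm a) u with
    | none => tfR Arch dm I ρ u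
    | some none => tfR Arch dm I ρ u ++ [TFVal.pair (tfR Arch dm I ρ (dm a)) a]
    | some (some f) => snoc' (tfR Arch dm I ρ u) (I f ρ.reverse a)

/-- `tf Arch dm I α u` : maximal information domain `u` is permitted to have after `α`. -/
def tf {A D L V : Type} (Arch : ExtArch D L) (dm : A → D)
    (I : L → List A → A → TFVal A V) (α : List A) (u : D) : List (TFVal A V) :=
  tfR Arch dm I α.reverse u

/-- `inF Arch dm I α a u` : the information `in_{dom(a),u}(α, a)` transmitted to `u`
when action `a` is performed after `α`. -/
def inF {A D L V : Type} (Arch : ExtArch D L) (dm : A → D)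
    (I : L → List A → A → TFVal A V) (α : List A) (a : A) (u : D) : TFVal A V :=
  match Arch.edge (dm a) u with
  | none => TFVal.eps
  | some none => TFVal.pair (tf Arch dm I α (dm a)) a
  | some (some f) => I f α a
/-- FTA-compliance of a machine with an interpreted extended architecture
(whose actions, domains and domain function are those of the machine). -/
def FTACompliant {S A D O L V : Type} (M : Machine S A D O) (Arch : ExtArch D L)
    (I : L → List A → A → TFVal A V) : Prop :=
  ∀ (u : D) (α α' : List A), tf Arch M.dom I α u = tf Arch M.dom I α' u →
    M.obs u (M.run α) = M.obs u (M.run α')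
/-- The five domains of the downgrader architecture `DG` (`Dg` is the
downgrader `D`, `Lo` the low-security domain `L`). -/
inductive DGDom where
  | C : DGDom
  | P : DGDom
  | H : DGDom
  | Dg : DGDom
  | Lo : DGDom
deriving DecidableEq

/-- The downgrader extended architecture: reflexive `⊤`-edges, `C ↝_⊤ H`,
`P ↝_⊤ H`, `H ↝_⊤ D` and `D ↝_rel L` (the label set is `Unit`, with `()`
standing for `rel`). -/
def DGArch : ExtArch DGDom Unit where
  edge u v :=
    match u, v with
    | .C, .C => some none
    | .P, .P => some none
    | .H, .H => some none
    | .Dg, .Dg => some none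
    | .Lo, .Lo => some none
    | .C, .H => some none
    | .P, .H => some none
    | .H, .Dg => some none
    | .Dg, .Lo => some (some ())
    | _, _ => none
  refl u := by cases u <;> rfl

/-- The policy `↝′`: `(u,v,f) ∈ ↝′` iff `f = ⊤` and either `u = v = C` or
there is an edge `(u,v,g)` in `DG` with `{u,v} ⊆ {P,H,D,L}`. -/
def DGArch' : ExtArch DGDom Unit where
  edge u v :=
    if (u = DGDom.C ∧ v = DGDom.C) ∨
        ((DGArch.edge u v).isSome = true ∧ u ≠ DGDom.C ∧ v ≠ DGDom.C)
    then some none else none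
  refl u := by cases u <;> decide

/-- Membership in the downgrader architectural specification `C_DG`: the
filter function `rel` transmits `(tf_D^{↝′}(α), a)`. -/
def memCDG {A V : Type} (dm : A → DGDom) (I : Unit → List A → A → TFVal A V) :
    Prop :=
  ∀ (α : List A) (a : A), dm a = DGDom.Dg →
    I () α a = TFVal.pair (tf DGArch' dm I α DGDom.Dg) a

section Aux

open Classical

/-- Boolean predicate: action's domain is not `C`. -/
def notC {A : Type} (dm : A → DGDom) (a : A) : Bool := decide (dm a ≠ DGDom.C)

lemma edge'_not_filter (u v : DGDom) (f : Unit) : DGArch'.edge u v ≠ some (some f) := by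
  show (if _ then some none else none) ≠ _
  split <;> simp

lemma edge'_C {v : DGDom} (hv : v ≠ DGDom.C) : DGArch'.edge DGDom.C v = none := by
  show (if _ then some none else none) = none
  rw [if_neg]
  simp [hv]

lemma tfR_cons_none {A D L V : Type} (Arch : ExtArch D L) (dm : A → D)
    (I : L → List A → A → TFVal A V) (a : A) (ρ : List A) (u : D)
    (h : Arch.edge (dm a) u = none) :
    tfR Arch dm I (a :: ρ) u = tfR Arch dm I ρ u := by
  rw [tfR, h]

lemma tfR_cons_top {A D L V : Type} (Arch : ExtArch D L) (dm : A → D)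
    (I : L → List A → A → TFVal A V) (a : A) (ρ : List A) (u : D)
    (h : Arch.edge (dm a) u = some none) :
    tfR Arch dm I (a :: ρ) u = tfR Arch dm I ρ u ++ [TFVal.pair (tfR Arch dm I ρ (dm a)) a] := by
  rw [tfR, h]

lemma tfR_cons_filt {A D L V : Type} (Arch : ExtArch D L) (dm : A → D)
    (I : L → List A → A → TFVal A V) (a : A) (ρ : List A) (u : D) (f : L)
    (h : Arch.edge (dm a) u = some (some f)) :
    tfR Arch dm I (a :: ρ) u = snoc' (tfR Arch dm I ρ u) (I f ρ.reverse a) := by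
  rw [tfR, h]

lemma tfR'_filter {A V : Type} (dm : A → DGDom) (I : Unit → List A → A → TFVal A V) :
    ∀ (ρ : List A) (u : DGDom), u ≠ DGDom.C →
      tfR DGArch' dm I ρ u = tfR DGArch' dm I (ρ.filter (notC dm)) u := by
  intro ρ
  induction ρ with
  | nil => intro u _; rfl
  | cons a ρ ih =>
    intro u hu
    by_cases hd : dm a = DGDom.C
    · have h1 : DGArch'.edge (dm a) u = none := by rw [hd]; exact edge'_C hu
      have h2 : notC dm a = false := by simp [notC, hd]
      rw [tfR_cons_none _ _ _ _ _ _ h1, List.filter_cons_of_neg (by simp [h2]), ih u hu]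
    · have h2 : notC dm a = true := by simp [notC, hd]
      rw [List.filter_cons_of_pos (by simp [h2])]
      cases h : DGArch'.edge (dm a) u with
      | none => rw [tfR_cons_none _ _ _ _ _ _ h, tfR_cons_none _ _ _ _ _ _ h, ih u hu]
      | some o =>
        cases o with
        | none =>
          rw [tfR_cons_top _ _ _ _ _ _ h, tfR_cons_top _ _ _ _ _ _ h, ih u hu, ih (dm a) hd]
        | some f => exact absurd h (edge'_not_filter _ _ f)

lemma tfR_Lo_filter {S A O V : Type} (M : Machine S A DGDom O)
    (I : Unit → List A → A → TFVal A V) (hI : memCDG M.dom I) :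
    ∀ ρ : List A, tfR DGArch M.dom I ρ DGDom.Lo
      = tfR DGArch M.dom I (ρ.filter (notC M.dom)) DGDom.Lo := by
  intro ρ
  induction ρ with
  | nil => rfl
  | cons a ρ ih =>
    by_cases hd : M.dom a = DGDom.C
    · have h1 : DGArch.edge (M.dom a) DGDom.Lo = none := by rw [hd]; rfl
      rw [tfR_cons_none _ _ _ _ _ _ h1,
        List.filter_cons_of_neg (by simp [notC, hd]), ih]
    · rw [List.filter_cons_of_pos (by simp [notC, hd])]
      cases hdd : M.dom a with
      | C => exact absurd hdd hd
      | P =>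
        have h1 : DGArch.edge (M.dom a) DGDom.Lo = none := by rw [hdd]; rfl
        rw [tfR_cons_none _ _ _ _ _ _ h1, tfR_cons_none _ _ _ _ _ _ h1, ih]
      | H =>
        have h1 : DGArch.edge (M.dom a) DGDom.Lo = none := by rw [hdd]; rfl
        rw [tfR_cons_none _ _ _ _ _ _ h1, tfR_cons_none _ _ _ _ _ _ h1, ih]
      | Lo =>
        have h1 : DGArch.edge (M.dom a) DGDom.Lo = some none := by rw [hdd]; rfl
        rw [tfR_cons_top _ _ _ _ _ _ h1, tfR_cons_top _ _ _ _ _ _ h1, ih, hdd, ih]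
      | Dg =>
        have h1 : DGArch.edge (M.dom a) DGDom.Lo = some (some ()) := by rw [hdd]; rfl
        rw [tfR_cons_filt _ _ _ _ _ _ _ h1, tfR_cons_filt _ _ _ _ _ _ _ h1, ih]
        congr 1
        rw [hI ρ.reverse a hdd, hI (ρ.filter (notC M.dom)).reverse a hdd]
        unfold tf
        rw [List.reverse_reverse, List.reverse_reverse,
          tfR'_filter M.dom I ρ DGDom.Dg (by simp)]

lemma obs_eq_of_tfR {S A O V : Type} (M : Machine S A DGDom O)
    (I : Unit → List A → A → TFVal A V) (hFTA : FTACompliant M DGArch I)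
    {ρ ρ' : List A}
    (h : tfR DGArch M.dom I ρ DGDom.Lo = tfR DGArch M.dom I ρ' DGDom.Lo) :
    M.obs DGDom.Lo (M.run ρ.reverse) = M.obs DGDom.Lo (M.run ρ'.reverse) := by
  apply hFTA DGDom.Lo
  unfold tf
  rwa [List.reverse_reverse, List.reverse_reverse]

lemma obsfun_eq {S A O : Type} (M : Machine S A DGDom O) {s s' : S}
    (h : M.obs DGDom.Lo s = M.obs DGDom.Lo s') :
    (fun u : ({DGDom.Lo} : Set DGDom) => M.obs u.1 s)
      = fun u : ({DGDom.Lo} : Set DGDom) => M.obs u.1 s' := by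
  funext u
  have hu : u.1 = DGDom.Lo := u.2
  rw [hu]; exact h

lemma getLast?_absorb {X : Type} (σ : List X) (x : X) : (absorb σ x).getLast? = some x := by
  unfold absorb
  split
  · assumption
  · exact List.getLast?_concat

lemma absorb_self {X : Type} {σ : List X} {x : X} (h : σ.getLast? = some x) :
    absorb σ x = σ := by
  unfold absorb
  rw [if_pos h]

lemma viewR_getLast {S A O : Type} (M : Machine S A DGDom O) (G : Set DGDom) :
    ∀ ρ : List A, (viewR M G ρ).getLast?
      = some (VE.obs (fun u : G => M.obs u.1 (M.run ρ.reverse))) := by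
  intro ρ
  cases ρ with
  | nil => rfl
  | cons a ρ =>
    rw [viewR]
    split
    · rw [show viewR M G ρ ++ [VE.act a, VE.obs fun u : G => M.obs u.1 (M.run (a :: ρ).reverse)]
          = (viewR M G ρ ++ [VE.act a]) ++ [VE.obs fun u : G => M.obs u.1 (M.run (a :: ρ).reverse)]
          by simp]
      exact List.getLast?_concat
    · exact getLast?_absorb _ _

lemma viewR_C_cons {S A O V : Type} (M : Machine S A DGDom O)
    (I : Unit → List A → A → TFVal A V) (hFTA : FTACompliant M DGArch I)
    (a : A) (ρ : List A) (hd : M.dom a = DGDom.C) :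
    viewR M {DGDom.Lo} (a :: ρ) = viewR M {DGDom.Lo} ρ := by
  have hnot : M.dom a ∉ ({DGDom.Lo} : Set DGDom) := by simp [hd]
  have htf : tfR DGArch M.dom I (a :: ρ) DGDom.Lo = tfR DGArch M.dom I ρ DGDom.Lo :=
    tfR_cons_none _ _ _ _ _ _ (by rw [hd]; rfl)
  have hobs := obs_eq_of_tfR M I hFTA htf
  have hfun := obsfun_eq M hobs
  rw [viewR]
  simp only [if_neg hnot]
  rw [hfun]
  exact absorb_self (viewR_getLast M _ ρ)

lemma viewR_filter {S A O V : Type} (M : Machine S A DGDom O)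
    (I : Unit → List A → A → TFVal A V) (hI : memCDG M.dom I)
    (hFTA : FTACompliant M DGArch I) :
    ∀ ρ : List A, viewR M {DGDom.Lo} ρ = viewR M {DGDom.Lo} (ρ.filter (notC M.dom)) := by
  intro ρ
  induction ρ with
  | nil => rfl
  | cons a ρ ih =>
    by_cases hd : M.dom a = DGDom.C
    · rw [viewR_C_cons M I hFTA a ρ hd,
        List.filter_cons_of_neg (by simp [notC, hd]), ih]
    · rw [List.filter_cons_of_pos (by simp [notC, hd])]
      have htf : tfR DGArch M.dom I (a :: ρ) DGDom.Lo
          = tfR DGArch M.dom I (a :: ρ.filter (notC M.dom)) DGDom.Lo := by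
        have h1 := tfR_Lo_filter M I hI (a :: ρ)
        rwa [List.filter_cons_of_pos (by simp [notC, hd])] at h1
      have hobs := obs_eq_of_tfR M I hFTA htf
      have hfun := obsfun_eq M hobs
      rw [viewR, viewR]
      by_cases hmem : M.dom a ∈ ({DGDom.Lo} : Set DGDom)
      · simp only [if_pos hmem]
        rw [ih, hfun]
      · simp only [if_neg hmem]
        rw [ih, hfun]

lemma restr_eq_filter {A : Type} (dm : A → DGDom) (γ : List A) :
    restr dm ({DGDom.C} : Set DGDom)ᶜ γ = γ.filter (notC dm) := by
  unfold restr notC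
  apply List.filter_congr
  intro a _
  rw [decide_eq_decide]
  simp

lemma view_eq_of_filter {S A O V : Type} (M : Machine S A DGDom O)
    (I : Unit → List A → A → TFVal A V) (hI : memCDG M.dom I)
    (hFTA : FTACompliant M DGArch I) {α β : List A}
    (h : α.filter (notC M.dom) = β.filter (notC M.dom)) :
    view M {DGDom.Lo} α = view M {DGDom.Lo} β := by
  unfold view
  rw [viewR_filter M I hI hFTA α.reverse, viewR_filter M I hI hFTA β.reverse,
    List.filter_reverse, List.filter_reverse, h]

end Aux

/-- if `M` is FTA-compliant with `(DG, C_DG)` and `π(p)` depends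
on `{C}` actions at `α`, then `M,π,α ⊨ ¬K_L p`. -/
theorem statement10 {S A O V PC : Type} (M : Machine S A DGDom O)
    (I : Unit → List A → A → TFVal A V) (hI : memCDG M.dom I)
    (hFTA : FTACompliant M DGArch I)
    (π : PC → Set (List A)) (p : PC) (α : List A)
    (hdep : DependsOnActs M.dom {DGDom.C} (π p) α) :
    sat M π α (Formula.neg (Formula.know {DGDom.Lo} (Formula.atom p))) := by
  obtain ⟨β, hr, hiff⟩ := hdep
  intro hk
  have hfilt : α.filter (notC M.dom) = β.filter (notC M.dom) := by
    rw [← restr_eq_filter, ← restr_eq_filter]; exact hr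
  have hα : α ∈ π p := hk α rfl
  have hβ : β ∈ π p := hk β (view_eq_of_filter M I hI hFTA hfilt.symm)
  exact (hiff.mp hα) hβ
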